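/- Consequently, I_n = 0 whenever n is odd, and I_{2m} = √2·π^{1/4}·√((2m-1)!!/(2m)!!) for all m ∈ ℕ, where I_n = ∫_ℝ ψ_n(ξ) dξ. -/

import Mathlib

noncomputable def H : ℕ → ℝ → ℝ
  | 0, _ => 1
  | 1, x => 2 * x
  | n + 2, x => 2 * x * H (n + 1) x - 2 * ((n : ℝ) + 1) * H n x

noncomputable def ψ (n : ℕ) (ξ : ℝ) : ℝ :=
  (Real.sqrt (Real.sqrt Real.pi * 2 ^ n * n.factorial))⁻¹ * H n ξ * Real.exp (-ξ ^ 2 / 2)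

open MeasureTheory in
noncomputable def I (n : ℕ) : ℝ := ∫ ξ : ℝ, ψ n ξ

open Polynomial MeasureTheory Real Filter Topology Asymptotics

noncomputable def P : ℕ → ℝ[X]
  | 0 => 1
  | 1 => C 2 * X
  | n + 2 => C 2 * X * P (n + 1) - C (2 * ((n : ℝ) + 1)) * P n

lemma H_eq_eval : ∀ (n : ℕ) (x : ℝ), H n x = (P n).eval x
  | 0, x => by simp [H, P]
  | 1, x => by simp [H, P]
  | n + 2, x => by
    simp only [H, P, H_eq_eval (n + 1) x, H_eq_eval n x, eval_sub, eval_mul, eval_C, eval_X]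

lemma P_deriv : ∀ n : ℕ, derivative (P n) = C (2 * (n : ℝ)) * P (n - 1)
  | 0 => by simp [P]
  | 1 => by simp [P]
  | 2 => by
    simp only [P, show P 1 = C 2 * X from rfl]
    simp only [derivative_sub, derivative_mul, derivative_C, derivative_X, derivative_one]
    simp only [show (C 2 : ℝ[X]) = 2 from map_ofNat C 2, map_mul, map_one, map_add,
      map_natCast]
    push_cast
    ring
  | n + 3 => by
    have ih1 := P_deriv (n + 2)
    have ih2 := P_deriv (n + 1)
    simp only [Nat.add_sub_cancel] at ih1 ih2
    rw [show n + 3 - 1 = n + 2 from rfl]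
    have hP3 : P (n + 3) =
        C 2 * X * P (n + 2) - C (2 * (((n + 1 : ℕ) : ℝ) + 1)) * P (n + 1) := rfl
    rw [hP3, derivative_sub, derivative_mul, derivative_mul, derivative_mul, ih1, ih2]
    have hP : P (n + 2) = C 2 * X * P (n + 1) - C (2 * ((n : ℝ) + 1)) * P n := rfl
    rw [hP]
    simp only [derivative_C, derivative_X]
    simp only [show (C 2 : ℝ[X]) = 2 from map_ofNat C 2, map_mul, map_one, map_add,
      map_natCast]
    push_cast
    ring

noncomputable def J (n : ℕ) : ℝ := ∫ x : ℝ, (P n).eval x * Real.exp (-x ^ 2 / 2)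

lemma integrable_PG (p : ℝ[X]) :
    Integrable fun x : ℝ => p.eval x * Real.exp (-x ^ 2 / 2) := by
  have key : ∀ x : ℝ, Real.exp (-x ^ 2 / 2) = Real.exp (-(1/2 : ℝ) * x ^ 2) := by
    intro x; ring_nf
  induction p using Polynomial.induction_on' with
  | monomial n c =>
    have h := (integrable_rpow_mul_exp_neg_mul_sq (by norm_num : (0:ℝ) < 1/2)
      (lt_of_lt_of_le neg_one_lt_zero (Nat.cast_nonneg n) : (-1 : ℝ) < (n : ℝ))).const_mul c
    simp only [Real.rpow_natCast] at h
    refine h.congr ?_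
    filter_upwards with x
    simp [key x, eval_monomial]
    ring
  | add p q hp hq =>
    exact (hp.add hq).congr (by filter_upwards with x; simp; ring)

lemma tendsto_PG_atTop (p : ℝ[X]) :
    Tendsto (fun x : ℝ => p.eval x * Real.exp (-x ^ 2 / 2)) atTop (𝓝 0) := by
  have key : ∀ x : ℝ, Real.exp (-x ^ 2 / 2) = Real.exp (-(1/2 : ℝ) * x ^ 2) := by
    intro x; ring_nf
  induction p using Polynomial.induction_on' with
  | monomial n c =>
    have h0 : Tendsto (fun x : ℝ => Real.exp (-(1/2) * x)) atTop (𝓝 0) := by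
      have h1 : Tendsto (fun x : ℝ => x / 2) atTop atTop :=
        Tendsto.atTop_div_const two_pos tendsto_id
      refine (Real.tendsto_exp_neg_atTop_nhds_zero.comp h1).congr fun x => ?_
      simp only [Function.comp_apply]
      ring_nf
    have h := (rpow_mul_exp_neg_mul_sq_isLittleO_exp_neg
      (by norm_num : (0:ℝ) < 1/2) (n : ℝ)).trans_tendsto h0
    simp only [Real.rpow_natCast] at h
    have := h.const_mul c
    simp only [mul_zero] at this
    refine this.congr' ?_
    filter_upwards with x
    simp [key x, eval_monomial]
    ring
  | add p q hp hq =>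
    have := hp.add hq
    simp only [add_zero] at this
    refine this.congr' ?_
    filter_upwards with x
    simp; ring

lemma tendsto_PG_atBot (p : ℝ[X]) :
    Tendsto (fun x : ℝ => p.eval x * Real.exp (-x ^ 2 / 2)) atBot (𝓝 0) := by
  have h := (tendsto_PG_atTop (p.comp (-X))).comp tendsto_neg_atBot_atTop
  refine h.congr fun x => ?_
  simp [Function.comp, eval_comp]

lemma hasDerivAt_PG (p : ℝ[X]) (x : ℝ) :
    HasDerivAt (fun x : ℝ => p.eval x * Real.exp (-x ^ 2 / 2))
      (((derivative p).eval x - x * p.eval x) * Real.exp (-x ^ 2 / 2)) x := by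
  have hexp : HasDerivAt (fun x : ℝ => Real.exp (-x ^ 2 / 2)) (-x * Real.exp (-x ^ 2 / 2)) x := by
    have h1 : HasDerivAt (fun x : ℝ => -x ^ 2 / 2) (-x) x := by
      have := ((hasDerivAt_pow 2 x).neg).div_const 2
      simpa using this.congr_deriv (by ring)
    simpa [mul_comm] using h1.exp
  have := (p.hasDerivAt x).mul hexp
  refine this.congr_deriv ?_
  ring

lemma J_step (n : ℕ) : J (n + 2) = 2 * ((n : ℝ) + 1) * J n := by
  set q := derivative (P (n + 1)) - X * P (n + 1) with hq
  have hFderiv : ∀ x : ℝ, HasDerivAt (fun x : ℝ => (P (n + 1)).eval x * Real.exp (-x ^ 2 / 2))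
      (q.eval x * Real.exp (-x ^ 2 / 2)) x := by
    intro x
    have := hasDerivAt_PG (P (n + 1)) x
    refine this.congr_deriv ?_
    simp [hq]
  have hFint : Integrable fun x : ℝ => q.eval x * Real.exp (-x ^ 2 / 2) := integrable_PG q
  have hzero : (∫ x : ℝ, q.eval x * Real.exp (-x ^ 2 / 2)) = 0 := by
    have := integral_of_hasDerivAt_of_tendsto hFderiv hFint
      (tendsto_PG_atBot (P (n + 1))) (tendsto_PG_atTop (P (n + 1)))
    simpa using this
  have hkey : ∀ x : ℝ, (P (n + 2)).eval x * Real.exp (-x ^ 2 / 2) =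
      2 * ((n : ℝ) + 1) * ((P n).eval x * Real.exp (-x ^ 2 / 2)) +
        (-2) * (q.eval x * Real.exp (-x ^ 2 / 2)) := by
    intro x
    have hd := P_deriv (n + 1)
    simp only [Nat.add_sub_cancel] at hd
    have hP : P (n + 2) = C 2 * X * P (n + 1) - C (2 * ((n : ℝ) + 1)) * P n := rfl
    simp only [hq, hP, eval_sub, eval_mul, eval_C, eval_X, hd]
    push_cast
    ring
  have hi1 : Integrable fun x : ℝ =>
      2 * ((n : ℝ) + 1) * ((P n).eval x * Real.exp (-x ^ 2 / 2)) :=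
    (integrable_PG (P n)).const_mul _
  have hi2 : Integrable fun x : ℝ => (-2 : ℝ) * (q.eval x * Real.exp (-x ^ 2 / 2)) :=
    hFint.const_mul _
  calc J (n + 2) = ∫ x : ℝ, (2 * ((n : ℝ) + 1) * ((P n).eval x * Real.exp (-x ^ 2 / 2)) +
        (-2) * (q.eval x * Real.exp (-x ^ 2 / 2))) := by
        unfold J; exact integral_congr_ae (by filter_upwards with x; exact hkey x)
    _ = 2 * ((n : ℝ) + 1) * J n := by
        rw [integral_add hi1 hi2, integral_const_mul, integral_const_mul, hzero]
        unfold J; ring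

lemma J_zero : J 0 = Real.sqrt (2 * Real.pi) := by
  have h := integral_gaussian (1/2 : ℝ)
  have : (∫ x : ℝ, Real.exp (-(1/2 : ℝ) * x ^ 2)) = Real.sqrt (2 * Real.pi) := by
    rw [h]; congr 1; field_simp
  rw [← this]
  unfold J
  congr 1
  funext x
  simp [P]
  ring_nf

lemma J_one : J 1 = 0 := by
  have hFderiv : ∀ x : ℝ, HasDerivAt (fun x : ℝ => (-2 : ℝ) * Real.exp (-x ^ 2 / 2))
      ((P 1).eval x * Real.exp (-x ^ 2 / 2)) x := by
    intro x
    have hexp := hasDerivAt_PG (1 : ℝ[X]) x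
    simp only [eval_one, derivative_one, eval_zero, one_mul] at hexp
    have := hexp.const_mul (-2 : ℝ)
    refine this.congr_deriv ?_
    simp [P]
    ring
  have hint : Integrable fun x : ℝ => (P 1).eval x * Real.exp (-x ^ 2 / 2) := integrable_PG _
  have hbot : Tendsto (fun x : ℝ => (-2 : ℝ) * Real.exp (-x ^ 2 / 2)) atBot (𝓝 0) := by
    have := (tendsto_PG_atBot (1 : ℝ[X])).const_mul (-2 : ℝ)
    simpa using this
  have htop : Tendsto (fun x : ℝ => (-2 : ℝ) * Real.exp (-x ^ 2 / 2)) atTop (𝓝 0) := by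
    have := (tendsto_PG_atTop (1 : ℝ[X])).const_mul (-2 : ℝ)
    simpa using this
  have := integral_of_hasDerivAt_of_tendsto hFderiv hint hbot htop
  unfold J
  simpa using this

lemma J_odd : ∀ k : ℕ, J (2 * k + 1) = 0
  | 0 => J_one
  | k + 1 => by
    have : 2 * (k + 1) + 1 = (2 * k + 1) + 2 := by ring
    rw [this, J_step, J_odd k, mul_zero]

lemma J_even : ∀ m : ℕ, J (2 * m) =
    2 ^ m * ((2 * m - 1 : ℕ).doubleFactorial : ℝ) * Real.sqrt (2 * Real.pi)
  | 0 => by simpa [Nat.doubleFactorial] using J_zero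
  | m + 1 => by
    have h1 : 2 * (m + 1) = 2 * m + 2 := by ring
    have h2 : (2 * (m + 1) - 1 : ℕ) = 2 * m + 1 := by omega
    rw [h1, J_step, J_even m]
    have h2' : (2 * m + 2 - 1 : ℕ) = 2 * m + 1 := by omega
    rw [h2']
    have h3 : ((2 * m + 1 : ℕ).doubleFactorial : ℝ) =
        (2 * m + 1 : ℝ) * ((2 * m - 1 : ℕ).doubleFactorial : ℝ) := by
      cases m with
      | zero => simp [Nat.doubleFactorial]
      | succ k =>
        have : 2 * (k + 1) + 1 = (2 * (k + 1) - 1) + 2 := by omega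
        rw [this, Nat.doubleFactorial_add_two]
        push_cast
        have : (2 * (k + 1) - 1 : ℕ) = 2 * k + 1 := by omega
        rw [this]
        push_cast
        ring
    rw [h3]
    push_cast
    ring

lemma I_eq (n : ℕ) :
    I n = (Real.sqrt (Real.sqrt Real.pi * 2 ^ n * n.factorial))⁻¹ * J n := by
  unfold I J ψ
  rw [← integral_const_mul]
  congr 1
  funext x
  rw [H_eq_eval]
  ring

theorem sw_hermite_integral_closed_form :
    (∀ n : ℕ, Odd n → I n = 0) ∧
      ∀ m : ℕ, I (2 * m) = Real.sqrt 2 * Real.pi ^ ((1 : ℝ) / 4) *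
        Real.sqrt (((2 * m - 1 : ℕ).doubleFactorial : ℝ) / ((2 * m).doubleFactorial : ℝ)) := by
  constructor
  · rintro n ⟨k, rfl⟩
    rw [I_eq]
    have : 2 * k + 1 = 2 * k + 1 := rfl
    rw [J_odd k, mul_zero]
  · intro m
    rw [I_eq, J_even m]
    set a : ℝ := ((2 * m - 1 : ℕ).doubleFactorial : ℝ) with ha
    set b : ℝ := ((2 * m).doubleFactorial : ℝ) with hb
    have hfac : ((2 * m).factorial : ℝ) = b * a := by
      cases m with
      | zero => simp [ha, hb, Nat.doubleFactorial]
      | succ k =>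
        have h1 : (2 * (k + 1)) = (2 * (k + 1) - 1) + 1 := by omega
        rw [ha, hb, h1, Nat.factorial_eq_mul_doubleFactorial]
        push_cast
        ring
    have hapos : 0 < a := by positivity
    have hbpos : 0 < b := by positivity
    have hsq : Real.sqrt (Real.sqrt Real.pi * 2 ^ (2 * m) * ((2 * m).factorial : ℝ)) =
        Real.pi ^ ((1:ℝ)/4) * 2 ^ m * (Real.sqrt a * Real.sqrt b) := by
      rw [hfac, Real.sqrt_mul (by positivity), Real.sqrt_mul (by positivity),
        Real.sqrt_mul (by positivity)]
      have h1 : Real.sqrt (Real.sqrt Real.pi) = Real.pi ^ ((1:ℝ)/4) := by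
        rw [Real.sqrt_eq_rpow, Real.sqrt_eq_rpow, ← Real.rpow_mul Real.pi_pos.le]
        norm_num
      have h2 : Real.sqrt ((2 : ℝ) ^ (2 * m)) = 2 ^ m := by
        rw [mul_comm, pow_mul, Real.sqrt_sq (by positivity)]
      rw [h1, h2]
      ring
    rw [hsq]
    have hπ4 : (0:ℝ) < Real.pi ^ ((1:ℝ)/4) := Real.rpow_pos_of_pos Real.pi_pos _
    have hsa : (0:ℝ) < Real.sqrt a := Real.sqrt_pos.2 hapos
    have hsb : (0:ℝ) < Real.sqrt b := Real.sqrt_pos.2 hbpos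
    have h2π : Real.sqrt (2 * Real.pi) = Real.sqrt 2 * Real.sqrt Real.pi :=
      Real.sqrt_mul (by norm_num) _
    have hπ : Real.sqrt Real.pi = Real.pi ^ ((1:ℝ)/4) * Real.pi ^ ((1:ℝ)/4) := by
      rw [Real.sqrt_eq_rpow, ← Real.rpow_add Real.pi_pos]; norm_num
    have haa : Real.sqrt a * Real.sqrt a = a := Real.mul_self_sqrt hapos.le
    have hdiv : Real.sqrt (a / b) = Real.sqrt a / Real.sqrt b := Real.sqrt_div hapos.le b
    rw [h2π, hπ, hdiv]
    field_simp
    linear_combination (-1 : ℝ) * haa
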